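/- arXiv:2506.06649 — 4 statements merged into one kernel-verified Lean document; each statement's English description precedes it below -/
import Mathlib

section
/- The softmax map on ℝ^L is (1/2)-Lipschitz from (ℝ^L, ‖·‖₂) into the probability simplex with total variation distance, i.e., for all logit vectors z₁, z₂ ∈ ℝ^L, ‖softmax(z₁) − softmax(z₂)‖_TV ≤ (1/2)‖z₁ − z₂‖₂, where ‖p − q‖_TV = (1/2)Σ_l |p(l) − q(l)|. -/
open Finset Real

/-- `softmax z i = exp (z i) / ∑ j, exp (z j)`. -/
noncomputable def softmax {L : ℕ} (z : Fin L → ℝ) : Fin L → ℝ :=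
  fun i => Real.exp (z i) / ∑ j, Real.exp (z j)

-- bound lemma
lemma sm_bound {L : ℕ} (p v ε : Fin L → ℝ) (hp : ∀ i, 0 ≤ p i) (hp1 : ∑ i, p i = 1)
    (hε : ∀ i, |ε i| ≤ 1) :
    |∑ i, ε i * (p i * (v i - ∑ j, p j * v j))| ≤ Real.sqrt (∑ i, (v i) ^ 2) := by
  set m := ∑ j, p j * v j with hm
  have hple : ∀ i, p i ≤ 1 := by
    intro i
    calc p i ≤ ∑ j, p j := Finset.single_le_sum (fun j _ => hp j) (mem_univ i)
    _ = 1 := hp1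
  have h1 : |∑ i, ε i * (p i * (v i - m))| ≤ ∑ i, p i * |v i - m| := by
    calc |∑ i, ε i * (p i * (v i - m))| ≤ ∑ i, |ε i * (p i * (v i - m))| :=
          Finset.abs_sum_le_sum_abs _ _
      _ ≤ ∑ i, p i * |v i - m| := by
          apply Finset.sum_le_sum
          intro i _
          rw [abs_mul, abs_mul, abs_of_nonneg (hp i)]
          calc |ε i| * (p i * |v i - m|) ≤ 1 * (p i * |v i - m|) :=
                mul_le_mul_of_nonneg_right (hε i) (mul_nonneg (hp i) (abs_nonneg _))
            _ = p i * |v i - m| := one_mul _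
  have h2 : ∑ i, p i * |v i - m| ≤ Real.sqrt (∑ i, p i * (v i - m) ^ 2) := by
    have := Real.sum_mul_le_sqrt_mul_sqrt (univ : Finset (Fin L))
      (fun i => Real.sqrt (p i)) (fun i => Real.sqrt (p i) * |v i - m|)
    have e1 : ∀ i : Fin L, Real.sqrt (p i) * (Real.sqrt (p i) * |v i - m|)
        = p i * |v i - m| := by
      intro i
      rw [← mul_assoc, Real.mul_self_sqrt (hp i)]
    have e2 : ∀ i : Fin L, Real.sqrt (p i) ^ 2 = p i := fun i => Real.sq_sqrt (hp i)
    have e3 : ∀ i : Fin L, (Real.sqrt (p i) * |v i - m|) ^ 2 = p i * (v i - m) ^ 2 := by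
      intro i
      rw [mul_pow, Real.sq_sqrt (hp i), sq_abs]
    simp only [e1, e2, e3] at this
    simpa [hp1] using this
  have h3 : ∑ i, p i * (v i - m) ^ 2 ≤ ∑ i, (v i) ^ 2 := by
    have expand : ∑ i, p i * (v i - m) ^ 2
        = (∑ i, p i * v i ^ 2) - 2 * m * (∑ i, p i * v i) + m ^ 2 * ∑ i, p i := by
      calc ∑ i, p i * (v i - m) ^ 2
          = ∑ i, (p i * v i ^ 2 - 2 * m * (p i * v i) + m ^ 2 * p i) :=
            Finset.sum_congr rfl (fun i _ => by ring)
        _ = _ := by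
            rw [Finset.sum_add_distrib, Finset.sum_sub_distrib, ← Finset.mul_sum,
              ← Finset.mul_sum]
    rw [expand, hp1, ← hm]
    have : (∑ i, p i * v i ^ 2) - 2 * m * m + m ^ 2 * 1 = (∑ i, p i * v i ^ 2) - m ^ 2 := by ring
    rw [this]
    have h4 : ∑ i, p i * v i ^ 2 ≤ ∑ i, v i ^ 2 := by
      apply Finset.sum_le_sum
      intro i _
      calc p i * v i ^ 2 ≤ 1 * v i ^ 2 := by
            apply mul_le_mul_of_nonneg_right (hple i); positivity
        _ = v i ^ 2 := one_mul _
    nlinarith [sq_nonneg m]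
  calc |∑ i, ε i * (p i * (v i - m))| ≤ Real.sqrt (∑ i, p i * (v i - m) ^ 2) :=
        h1.trans h2
    _ ≤ Real.sqrt (∑ i, (v i) ^ 2) := Real.sqrt_le_sqrt h3

-- derivative lemma
lemma sm_deriv {L : ℕ} (a v ε : Fin L → ℝ) (t : ℝ) :
    HasDerivAt (fun s => ∑ i, ε i * softmax (fun j => a j + s * v j) i)
      (∑ i, ε i * (softmax (fun j => a j + t * v j) i *
        (v i - ∑ j, softmax (fun j' => a j' + t * v j') j * v j))) t := by
  apply HasDerivAt.fun_sum
  intro i _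
  have hL : (univ : Finset (Fin L)).Nonempty := ⟨i, mem_univ i⟩
  have hSpos : ∀ s : ℝ, 0 < ∑ j, Real.exp (a j + s * v j) := by
    intro s
    exact Finset.sum_pos (fun j _ => Real.exp_pos _) hL
  have hE : ∀ j : Fin L, HasDerivAt (fun s => Real.exp (a j + s * v j))
      (Real.exp (a j + t * v j) * v j) t := by
    intro j
    have : HasDerivAt (fun s : ℝ => a j + s * v j) (v j) t := by
      simpa using ((hasDerivAt_id t).mul_const (v j)).const_add (a j)
    exact this.exp
  have hS : HasDerivAt (fun s => ∑ j, Real.exp (a j + s * v j))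
      (∑ j, Real.exp (a j + t * v j) * v j) t := HasDerivAt.fun_sum (fun j _ => hE j)
  have hq : HasDerivAt (fun s => softmax (fun j => a j + s * v j) i)
      ((Real.exp (a i + t * v i) * v i * (∑ j, Real.exp (a j + t * v j))
        - Real.exp (a i + t * v i) * ∑ j, Real.exp (a j + t * v j) * v j)
        / (∑ j, Real.exp (a j + t * v j)) ^ 2) t := by
    exact (hE i).div hS (ne_of_gt (hSpos t))
  have := hq.const_mul (ε i)
  convert this using 1
  · rfl
  unfold softmax
  have hS0 := (hSpos t).ne'
  field_simp
  rw [← Finset.sum_div]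
  field_simp

/-- Softmax is `(1/2)`-Lipschitz from `(ℝ^L, ‖·‖₂)` to the probability simplex with
the total variation distance `‖p - q‖_TV = (1/2) ∑ |p l - q l|`. -/
theorem stmt5 {L : ℕ} (z₁ z₂ : Fin L → ℝ) :
    (1 / 2) * ∑ l, |softmax z₁ l - softmax z₂ l| ≤
      (1 / 2) * Real.sqrt (∑ l, (z₁ l - z₂ l) ^ 2) := by
  have key : ∑ l, |softmax z₁ l - softmax z₂ l| ≤ Real.sqrt (∑ l, (z₁ l - z₂ l) ^ 2) := by
    rcases Nat.eq_zero_or_pos L with hL | hL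
    · subst hL; simp
    set v : Fin L → ℝ := fun j => z₁ j - z₂ j with hv
    set ε : Fin L → ℝ := fun i => if 0 ≤ softmax z₁ i - softmax z₂ i then 1 else -1 with hε
    set φ : ℝ → ℝ := fun s => ∑ i, ε i * softmax (fun j => z₂ j + s * v j) i with hφ
    have hderiv : ∀ t : ℝ, HasDerivAt φ
        (∑ i, ε i * (softmax (fun j => z₂ j + t * v j) i *
          (v i - ∑ j, softmax (fun j' => z₂ j' + t * v j') j * v j))) t :=
      fun t => sm_deriv z₂ v ε t
    obtain ⟨c, _, hc⟩ := exists_hasDerivAt_eq_slope φ _ one_pos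
      (fun x _ => (hderiv x).continuousAt.continuousWithinAt)
      (fun x _ => hderiv x)
    have e1 : (fun j => z₂ j + (1 : ℝ) * v j) = z₁ := by funext j; simp [hv]
    have e0 : (fun j => z₂ j + (0 : ℝ) * v j) = z₂ := by funext j; simp
    have hφ1 : φ 1 = ∑ i, ε i * softmax z₁ i := by simp only [hφ, e1]
    have hφ0 : φ 0 = ∑ i, ε i * softmax z₂ i := by simp only [hφ, e0]
    have hslope : φ 1 - φ 0 = ∑ l, |softmax z₁ l - softmax z₂ l| := by
      rw [hφ1, hφ0, ← Finset.sum_sub_distrib]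
      apply Finset.sum_congr rfl
      intro i _
      rw [← mul_sub, hε]
      by_cases h : 0 ≤ softmax z₁ i - softmax z₂ i
      · simp [h, abs_of_nonneg h]
      · push_neg at h
        simp [not_le.mpr h, abs_of_neg h]
    -- bound derivative at c
    set p : Fin L → ℝ := softmax (fun j => z₂ j + c * v j) with hp
    have hSpos : 0 < ∑ j, Real.exp (z₂ j + c * v j) :=
      Finset.sum_pos (fun j _ => Real.exp_pos _) (Finset.univ_nonempty_iff.mpr
        ⟨⟨0, hL⟩⟩)
    have hpnn : ∀ i, 0 ≤ p i := by
      intro i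
      exact div_nonneg (Real.exp_pos _).le hSpos.le
    have hp1 : ∑ i, p i = 1 := by
      simp only [hp, softmax]
      rw [← Finset.sum_div, div_self hSpos.ne']
    have hεb : ∀ i, |ε i| ≤ 1 := by
      intro i; rw [hε]
      by_cases h : 0 ≤ softmax z₁ i - softmax z₂ i <;> simp [h]
    have hb := sm_bound p v ε hpnn hp1 hεb
    have : ∑ l, |softmax z₁ l - softmax z₂ l| =
        ∑ i, ε i * (p i * (v i - ∑ j, p j * v j)) := by
      rw [← hslope, hc]; norm_num
    rw [this]
    calc ∑ i, ε i * (p i * (v i - ∑ j, p j * v j))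
        ≤ |∑ i, ε i * (p i * (v i - ∑ j, p j * v j))| := le_abs_self _
      _ ≤ Real.sqrt (∑ i, (v i) ^ 2) := hb
  linarith
end

section
/- Super-uniformity of a rank-based conformal p-value: let Z₁,…,Z_{n+1} be exchangeable real-valued random variables, and let U ~ Unif(0,1) be independent of them. Define p = ( #{i ≤ n : Z_i < Z_{n+1}} + U·(1 + #{i ≤ n : Z_i = Z_{n+1}}) ) / (n+1). Then P(p ≤ α) ≤ α for all α ∈ [0,1]; moreover p is exactly uniformly distributed on [0,1] when randomized tie-breaking is used. -/
open MeasureTheory ProbabilityTheory Finset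
open scoped ENNReal
open scoped Classical

/-- The rank-based conformal p-value comparing the test score `Z (Fin.last n)` against
the calibration scores `Z 0, …, Z (n-1)`, with uniform tie-breaking variable `U`. -/
noncomputable def confPValue {Ω : Type*} (n : ℕ) (Z : Fin (n + 1) → Ω → ℝ) (U : Ω → ℝ)
    (ω : Ω) : ℝ :=
  (((Finset.univ.filter fun i : Fin n => Z i.castSucc ω < Z (Fin.last n) ω).card : ℝ) +
      U ω * (1 + ((Finset.univ.filter fun i : Fin n =>
        Z i.castSucc ω = Z (Fin.last n) ω).card : ℝ))) / (n + 1)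

namespace ConfAux


variable {n : ℕ}

noncomputable def clt (z : Fin (n+1) → ℝ) (j : Fin (n+1)) : ℕ :=
  (Finset.univ.filter fun i => z i < z j).card

noncomputable def cle (z : Fin (n+1) → ℝ) (j : Fin (n+1)) : ℕ :=
  (Finset.univ.filter fun i => z i ≤ z j).card

lemma clt_lt_cle (z : Fin (n+1) → ℝ) (j : Fin (n+1)) : clt z j < cle z j := by
  apply Finset.card_lt_card
  constructor
  · intro i hi
    simp only [mem_filter, mem_univ, true_and] at hi ⊢
    exact hi.le
  · intro hsub
    have := hsub (by simp : j ∈ Finset.univ.filter fun i => z i ≤ z j)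
    simp at this
lemma cle_le (z : Fin (n+1) → ℝ) (j : Fin (n+1)) : cle z j ≤ n+1 := by
  simpa [cle] using Finset.card_filter_le Finset.univ fun i => z i ≤ z j

lemma clt_congr {z : Fin (n+1) → ℝ} {j j' : Fin (n+1)} (h : z j = z j') : clt z j = clt z j' := by
  unfold clt; rw [h]

lemma cle_congr {z : Fin (n+1) → ℝ} {j j' : Fin (n+1)} (h : z j = z j') : cle z j = cle z j' := by
  unfold cle; rw [h]

lemma cle_le_clt {z : Fin (n+1) → ℝ} {j j' : Fin (n+1)} (h : z j < z j') : cle z j ≤ clt z j' := by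
  apply Finset.card_le_card
  intro i hi
  simp only [mem_filter, mem_univ, true_and] at hi ⊢
  exact lt_of_le_of_lt hi h

lemma exists_mid (z : Fin (n+1) → ℝ) {k : ℕ} (hk : k ≤ n) :
    ∃ j, clt z j ≤ k ∧ k < cle z j := by
  classical
  set S : Finset (Fin (n+1)) := Finset.univ.filter fun j => clt z j ≤ k with hS
  have hSne : S.Nonempty := by
    obtain ⟨jm, -, hjm⟩ := Finset.exists_min_image Finset.univ z Finset.univ_nonempty
    refine ⟨jm, ?_⟩
    simp only [hS, mem_filter, mem_univ, true_and]
    have : (Finset.univ.filter fun i => z i < z jm) = ∅ := by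
      apply Finset.filter_eq_empty_iff.mpr
      intro i _
      exact not_lt.mpr (hjm i (mem_univ i))
    simp [clt, this]
  obtain ⟨j₀, hj₀S, hmax⟩ := Finset.exists_max_image S (clt z) hSne
  have hj₀ : clt z j₀ ≤ k := by simpa [hS] using hj₀S
  refine ⟨j₀, hj₀, ?_⟩
  by_contra hcon
  push_neg at hcon
  -- cle z j₀ ≤ k
  have hex : ∃ i, z j₀ < z i := by
    by_contra hall
    push_neg at hall
    have : (Finset.univ.filter fun i => z i ≤ z j₀) = Finset.univ := by
      apply Finset.filter_eq_self.mpr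
      intro i _; exact hall i
    have : cle z j₀ = n+1 := by simp [cle, this]
    omega
  obtain ⟨iw, hiw⟩ := hex
  set T : Finset (Fin (n+1)) := Finset.univ.filter fun i => z j₀ < z i with hT
  have hTne : T.Nonempty := ⟨iw, by simp [hT, hiw]⟩
  obtain ⟨i₀, hi₀T, hmin⟩ := Finset.exists_min_image T z hTne
  have hi₀ : z j₀ < z i₀ := by simpa [hT] using hi₀T
  have hkey : clt z i₀ = cle z j₀ := by
    have hset : (Finset.univ.filter fun i => z i < z i₀)
        = (Finset.univ.filter fun i => z i ≤ z j₀) := by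
      ext l
      simp only [mem_filter, mem_univ, true_and]
      constructor
      · intro hl
        by_contra hl'
        push_neg at hl'
        exact absurd (hmin l (by simp [hT, hl'])) (not_le.mpr hl)
      · intro hl; exact lt_of_le_of_lt hl hi₀
    unfold clt cle
    rw [hset]
  have hi₀S : i₀ ∈ S := by simp [hS, hkey]; omega
  have := hmax i₀ hi₀S
  have := clt_lt_cle z j₀
  omega

lemma card_eq (z : Fin (n+1) → ℝ) (j : Fin (n+1)) :
    (Finset.univ.filter fun i => z i = z j).card = cle z j - clt z j := by
  have hunion : (Finset.univ.filter fun i => z i ≤ z j)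
      = (Finset.univ.filter fun i => z i < z j) ∪ (Finset.univ.filter fun i => z i = z j) := by
    ext i
    simp only [Finset.mem_union, mem_filter, mem_univ, true_and]
    exact le_iff_lt_or_eq
  have hdisj : Disjoint (Finset.univ.filter fun i => z i < z j)
      (Finset.univ.filter fun i => z i = z j) := by
    rw [Finset.disjoint_left]
    intro i hi hi'
    simp only [mem_filter, mem_univ, true_and] at hi hi'
    exact absurd hi' (ne_of_lt hi)
  have : cle z j = clt z j + (Finset.univ.filter fun i => z i = z j).card := by
    rw [cle, hunion, Finset.card_union_of_disjoint hdisj]; rfl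
  omega


lemma clamp_eq {a b : ℝ} (β : ℝ) (hab : a < b) :
    max 0 (min ((β - a)/(b - a)) 1) = (min β b - min β a)/(b - a) := by
  have hm : (0:ℝ) < b - a := sub_pos.mpr hab
  rcases le_total β a with h | h
  · have h1 : min β a = β := min_eq_left h
    have h2 : min β b = β := min_eq_left (h.trans hab.le)
    have h3 : (β - a)/(b - a) ≤ 0 := div_nonpos_of_nonpos_of_nonneg (by linarith) hm.le
    rw [h1, h2, max_eq_left (le_trans (min_le_left _ _) h3)]
    simp
  · have h1 : min β a = a := min_eq_right h
    rcases le_total β b with h' | h'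
    · have h2 : min β b = β := min_eq_left h'
      have h3 : (β - a)/(b - a) ≤ 1 := by
        rw [div_le_one hm]; linarith
      have h4 : 0 ≤ (β - a)/(b - a) := div_nonneg (by linarith) hm.le
      rw [h1, h2, min_eq_left h3, max_eq_right h4]
    · have h2 : min β b = b := min_eq_right h'
      have h3 : (1:ℝ) ≤ (β - a)/(b - a) := by
        rw [le_div_iff₀ hm]; linarith
      rw [h1, h2, min_eq_right h3, max_eq_right (by linarith : (0:ℝ) ≤ 1)]
      rw [div_self hm.ne']

lemma key (z : Fin (n+1) → ℝ) {β : ℝ} (h0 : 0 ≤ β) (h1 : β ≤ n+1) :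
    ∑ j : Fin (n+1), max 0 (min ((β - (clt z j : ℝ)) / ((cle z j : ℝ) - (clt z j : ℝ))) 1)
      = β := by
  classical
  set f : ℕ → ℝ := fun k => min β k with hf
  have hmpos : ∀ j, (0:ℝ) < (cle z j : ℝ) - (clt z j : ℝ) := fun j => by
    have := clt_lt_cle z j
    have : (clt z j : ℝ) < (cle z j : ℝ) := by exact_mod_cast this
    linarith
  -- per-term rewrite
  have hterm : ∀ j : Fin (n+1),
      max 0 (min ((β - (clt z j : ℝ)) / ((cle z j : ℝ) - (clt z j : ℝ))) 1)
        = ∑ k ∈ Finset.Ico (clt z j) (cle z j),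
            (f (k+1) - f k) * (1 / ((cle z j : ℝ) - (clt z j : ℝ))) := by
    intro j
    have hab : (clt z j : ℝ) < (cle z j : ℝ) := by exact_mod_cast clt_lt_cle z j
    rw [clamp_eq β hab]
    have htel : ∑ k ∈ Finset.Ico (clt z j) (cle z j), (f (k+1) - f k)
        = f (cle z j) - f (clt z j) := by
      rw [Finset.sum_Ico_eq_sub _ (clt_lt_cle z j).le, Finset.sum_range_sub, Finset.sum_range_sub]
      ring
    rw [← Finset.sum_mul, htel]
    simp only [hf]
    rw [div_eq_mul_one_div]
  rw [Finset.sum_congr rfl fun j _ => hterm j]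
  -- extend inner sums to range (n+1)
  have hext : ∀ j : Fin (n+1),
      ∑ k ∈ Finset.Ico (clt z j) (cle z j),
          (f (k+1) - f k) * (1 / ((cle z j : ℝ) - (clt z j : ℝ)))
        = ∑ k ∈ Finset.range (n+1),
            if clt z j ≤ k ∧ k < cle z j then
              (f (k+1) - f k) * (1 / ((cle z j : ℝ) - (clt z j : ℝ))) else 0 := by
    intro j
    rw [eq_comm, Finset.sum_ite, Finset.sum_const_zero, add_zero]
    apply Finset.sum_congr _ (fun _ _ => rfl)
    ext k
    simp only [Finset.mem_filter, Finset.mem_range, Finset.mem_Ico]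
    have := cle_le z j
    omega
  rw [Finset.sum_congr rfl fun j _ => hext j, Finset.sum_comm]
  -- inner sum over j equals 1 for each k
  have hinner : ∀ k, k < n + 1 →
      ∑ j : Fin (n+1), (if clt z j ≤ k ∧ k < cle z j then
          (1 / ((cle z j : ℝ) - (clt z j : ℝ))) else 0) = 1 := by
    intro k hk
    obtain ⟨j₀, hj₁, hj₂⟩ := exists_mid z (Nat.lt_succ_iff.mp hk)
    have hfilter : (Finset.univ.filter fun j : Fin (n+1) => clt z j ≤ k ∧ k < cle z j)
        = Finset.univ.filter fun j => z j = z j₀ := by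
      ext j
      simp only [Finset.mem_filter, Finset.mem_univ, true_and]
      constructor
      · rintro ⟨h1, h2⟩
        rcases lt_trichotomy (z j) (z j₀) with hlt | heq | hgt
        · have := cle_le_clt hlt; omega
        · exact heq
        · have := cle_le_clt hgt; omega
      · intro he
        rw [clt_congr he, cle_congr he]
        exact ⟨hj₁, hj₂⟩
    rw [Finset.sum_ite, Finset.sum_const_zero, add_zero, hfilter]
    have hconst : ∀ j ∈ Finset.univ.filter fun j : Fin (n+1) => z j = z j₀,
        (1 / ((cle z j : ℝ) - (clt z j : ℝ)))
          = (1 / ((cle z j₀ : ℝ) - (clt z j₀ : ℝ))) := by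
      intro j hj
      simp only [Finset.mem_filter, Finset.mem_univ, true_and] at hj
      rw [clt_congr hj, cle_congr hj]
    rw [Finset.sum_congr rfl hconst, Finset.sum_const, card_eq z j₀, nsmul_eq_mul,
      Nat.cast_sub (clt_lt_cle z j₀).le, mul_one_div, div_self (hmpos j₀).ne']
  have hstep : ∀ k ∈ Finset.range (n+1),
      ∑ j : Fin (n+1), (if clt z j ≤ k ∧ k < cle z j then
          (f (k+1) - f k) * (1 / ((cle z j : ℝ) - (clt z j : ℝ))) else 0)
        = f (k+1) - f k := by
    intro k hk
    have : ∀ j : Fin (n+1), (if clt z j ≤ k ∧ k < cle z j then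
          (f (k+1) - f k) * (1 / ((cle z j : ℝ) - (clt z j : ℝ))) else 0)
        = (f (k+1) - f k) * (if clt z j ≤ k ∧ k < cle z j then
          (1 / ((cle z j : ℝ) - (clt z j : ℝ))) else 0) := by
      intro j
      rw [mul_ite, mul_zero]
    rw [Finset.sum_congr rfl fun j _ => this j, ← Finset.mul_sum,
      hinner k (Finset.mem_range.mp hk), mul_one]
  rw [Finset.sum_congr rfl hstep, Finset.sum_range_sub]
  simp only [hf]
  rw [Nat.cast_add, Nat.cast_one, Nat.cast_zero]
  rw [min_eq_left h1, min_eq_right h0]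
  ring


lemma cltR_eq_sum (z : Fin (n+1) → ℝ) (j : Fin (n+1)) :
    (clt z j : ℝ) = ∑ i : Fin (n+1), if z i < z j then (1:ℝ) else 0 := by
  rw [clt, Finset.card_filter, Nat.cast_sum]
  apply Finset.sum_congr rfl
  intro i _
  split <;> simp

lemma cleR_eq_sum (z : Fin (n+1) → ℝ) (j : Fin (n+1)) :
    (cle z j : ℝ) = ∑ i : Fin (n+1), if z i ≤ z j then (1:ℝ) else 0 := by
  rw [cle, Finset.card_filter, Nat.cast_sum]
  apply Finset.sum_congr rfl
  intro i _
  split <;> simp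

lemma meas_cltR (j : Fin (n+1)) : Measurable fun z : Fin (n+1) → ℝ => (clt z j : ℝ) := by
  simp only [cltR_eq_sum]
  apply Finset.measurable_sum
  intro i _
  exact Measurable.ite (measurableSet_lt (measurable_pi_apply i) (measurable_pi_apply j))
    measurable_const measurable_const

lemma meas_cleR (j : Fin (n+1)) : Measurable fun z : Fin (n+1) → ℝ => (cle z j : ℝ) := by
  simp only [cleR_eq_sum]
  apply Finset.measurable_sum
  intro i _
  exact Measurable.ite (measurableSet_le (measurable_pi_apply i) (measurable_pi_apply j))
    measurable_const measurable_const

lemma perm_card (p : Fin (n+1) → Prop) (π : Equiv.Perm (Fin (n+1))) :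
    (Finset.univ.filter fun i => p (π i)).card = (Finset.univ.filter p).card := by
  apply Finset.card_bij' (fun i _ => π i) (fun i _ => π.symm i) <;>
    intro i hi <;> simp_all

lemma clt_perm (z : Fin (n+1) → ℝ) (π : Equiv.Perm (Fin (n+1))) (j : Fin (n+1)) :
    clt (fun i => z (π i)) j = clt z (π j) := by
  rw [clt, clt]
  exact perm_card (fun i => z i < z (π j)) π

lemma cle_perm (z : Fin (n+1) → ℝ) (π : Equiv.Perm (Fin (n+1))) (j : Fin (n+1)) :
    cle (fun i => z (π i)) j = cle z (π j) := by
  rw [cle, cle]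
  exact perm_card (fun i => z i ≤ z (π j)) π

lemma clt_last (z : Fin (n+1) → ℝ) :
    ((Finset.univ.filter fun i : Fin n => z i.castSucc < z (Fin.last n)).card : ℕ)
      = clt z (Fin.last n) := by
  rw [clt, Finset.card_filter, Finset.card_filter, Fin.sum_univ_castSucc]
  simp

lemma cle_last (z : Fin (n+1) → ℝ) :
    1 + ((Finset.univ.filter fun i : Fin n => z i.castSucc = z (Fin.last n)).card : ℕ)
      = cle z (Fin.last n) - clt z (Fin.last n) := by
  rw [← card_eq z (Fin.last n), Finset.card_filter, Finset.card_filter, Fin.sum_univ_castSucc]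
  simp [add_comm]

lemma ofReal_max_zero (x : ℝ) : ENNReal.ofReal (max 0 x) = ENNReal.ofReal x := by
  rcases le_total x 0 with h | h
  · rw [max_eq_left h, ENNReal.ofReal_eq_zero.mpr h]
    simp
  · rw [max_eq_right h]


lemma ennreal_cancel {a b c : ENNReal} (h0 : a ≠ 0) (ht : a ≠ ⊤) (h : a * b = a * c) :
    b = c := by
  rw [← ENNReal.eq_div_iff h0 ht] at h
  rw [h, mul_div_assoc, ENNReal.mul_div_cancel h0 ht]

-- uniform measure of a lower ray
lemma unif_Iic (t : ℝ) :
    (volume.restrict (Set.Icc (0:ℝ) 1)) (Set.Iic t) = ENNReal.ofReal (min t 1) := by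
  rw [Measure.restrict_apply measurableSet_Iic]
  have : Set.Iic t ∩ Set.Icc (0:ℝ) 1 = Set.Icc 0 (min t 1) := by
    ext u
    simp only [Set.mem_inter_iff, Set.mem_Iic, Set.mem_Icc, le_min_iff]
    tauto
  rw [this, Real.volume_Icc, sub_zero]

end ConfAux

open ConfAux

/-- Super-uniformity (indeed exact uniformity) of the rank-based conformal p-value: if
`Z 0, …, Z n` are exchangeable and `U` is uniform on `[0,1]` and independent of them,
then `P(p ≤ α) ≤ α` for all `α ∈ [0,1]`, and moreover `p` is exactly uniform on
`[0,1]`. -/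
theorem stmt11 {Ω : Type*} [MeasurableSpace Ω] (μ : Measure Ω) [IsProbabilityMeasure μ]
    (n : ℕ) (Z : Fin (n + 1) → Ω → ℝ) (U : Ω → ℝ)
    (hZ : ∀ i, Measurable (Z i)) (hU : Measurable U)
    (hexch : ∀ π : Equiv.Perm (Fin (n + 1)),
      Measure.map (fun ω => fun i => Z (π i) ω) μ =
        Measure.map (fun ω => fun i => Z i ω) μ)
    (hUdist : Measure.map U μ = volume.restrict (Set.Icc (0 : ℝ) 1))
    (hindep : IndepFun (fun ω => fun i => Z i ω) U μ) :
    (∀ α ∈ Set.Icc (0 : ℝ) 1,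
        μ {ω | confPValue n Z U ω ≤ α} ≤ ENNReal.ofReal α) ∧
      Measure.map (confPValue n Z U) μ = volume.restrict (Set.Icc (0 : ℝ) 1) := by
  classical
  set Zv : Ω → (Fin (n+1) → ℝ) := fun ω i => Z i ω with hZvdef
  have hZvm : Measurable Zv := measurable_pi_lambda _ hZ
  set ν : Measure (Fin (n+1) → ℝ) := Measure.map Zv μ with hνdef
  haveI : IsProbabilityMeasure ν := Measure.isProbabilityMeasure_map hZvm.aemeasurable
  set ρ : Measure ℝ := Measure.map U μ with hρdef
  haveI : IsProbabilityMeasure ρ := Measure.isProbabilityMeasure_map hU.aemeasurable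
  have hjoint : Measure.map (fun ω => (Zv ω, U ω)) μ = ν.prod ρ :=
    (indepFun_iff_map_prod_eq_prod_map_map hZvm.aemeasurable hU.aemeasurable).mp hindep
  -- the p-value as a function of (Zv, U)
  set F : (Fin (n+1) → ℝ) × ℝ → ℝ := fun p =>
    ((clt p.1 (Fin.last n) : ℝ) + p.2 * ((cle p.1 (Fin.last n) : ℝ)
      - (clt p.1 (Fin.last n) : ℝ))) / (n + 1) with hFdef
  have hFmeas : Measurable F := by
    apply Measurable.div_const
    exact ((meas_cltR (Fin.last n)).comp measurable_fst).add
      (measurable_snd.mul (((meas_cleR (Fin.last n)).comp measurable_fst).sub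
        ((meas_cltR (Fin.last n)).comp measurable_fst)))
  have hconf : ∀ ω, confPValue n Z U ω = F (Zv ω, U ω) := by
    intro ω
    rw [confPValue, hFdef]
    simp only
    have e1 := clt_last (n := n) (Zv ω)
    have e2 := cle_last (n := n) (Zv ω)
    have h1 : ((Finset.univ.filter fun i : Fin n =>
        Z i.castSucc ω < Z (Fin.last n) ω).card : ℝ) = (clt (Zv ω) (Fin.last n) : ℝ) := by
      exact_mod_cast congrArg (Nat.cast (R := ℝ)) e1
    have h2 : (1 : ℝ) + ((Finset.univ.filter fun i : Fin n =>
        Z i.castSucc ω = Z (Fin.last n) ω).card : ℝ)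
          = (cle (Zv ω) (Fin.last n) : ℝ) - (clt (Zv ω) (Fin.last n) : ℝ) := by
      have := congrArg (Nat.cast (R := ℝ)) e2
      push_cast [Nat.cast_sub (clt_lt_cle (Zv ω) (Fin.last n)).le] at this
      exact_mod_cast this
    rw [h1, h2]
  have hconfm : Measurable (confPValue n Z U) := by
    have : confPValue n Z U = fun ω => F (Zv ω, U ω) := funext hconf
    rw [this]
    exact hFmeas.comp (hZvm.prodMk hU)
  -- invariance of ν under permutations
  have hmap : ∀ π : Equiv.Perm (Fin (n+1)),
      Measure.map (fun z : Fin (n+1) → ℝ => fun i => z (π i)) ν = ν := by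
    intro π
    rw [hνdef, Measure.map_map (measurable_pi_lambda _ fun i => measurable_pi_apply (π i)) hZvm]
    exact hexch π
  -- main exact computation
  have hmain : ∀ α : ℝ, 0 ≤ α → α ≤ 1 →
      μ {ω | confPValue n Z U ω ≤ α} = ENNReal.ofReal α := by
    intro α hα0 hα1
    set β : ℝ := ((n : ℝ) + 1) * α with hβdef
    set g : Fin (n+1) → (Fin (n+1) → ℝ) → ℝ≥0∞ := fun j z =>
      ENNReal.ofReal (min ((β - (clt z j : ℝ)) / ((cle z j : ℝ) - (clt z j : ℝ))) 1)
      with hgdef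
    have hgm : ∀ j, Measurable (g j) := by
      intro j
      apply ENNReal.measurable_ofReal.comp
      exact (((measurable_const.sub (meas_cltR j)).div
        ((meas_cleR j).sub (meas_cltR j))).min measurable_const)
    have hmpos : ∀ (z : Fin (n+1) → ℝ) j, (0:ℝ) < (cle z j : ℝ) - (clt z j : ℝ) := by
      intro z j
      have h := clt_lt_cle z j
      have : (clt z j : ℝ) < (cle z j : ℝ) := by exact_mod_cast h
      linarith
    set s : Set ((Fin (n+1) → ℝ) × ℝ) := {p | F p ≤ α} with hsdef
    have hs : MeasurableSet s := hFmeas measurableSet_Iic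
    have h1 : {ω | confPValue n Z U ω ≤ α} = (fun ω => (Zv ω, U ω)) ⁻¹' s := by
      ext ω
      simp [hsdef, hconf ω]
    have h2 : μ {ω | confPValue n Z U ω ≤ α} = ∫⁻ z, g (Fin.last n) z ∂ν := by
      rw [h1, ← Measure.map_apply (hZvm.prodMk hU) hs, hjoint, Measure.prod_apply hs]
      apply lintegral_congr
      intro z
      have hm := hmpos z (Fin.last n)
      have hpre : Prod.mk z ⁻¹' s
          = Set.Iic ((β - (clt z (Fin.last n) : ℝ))
              / ((cle z (Fin.last n) : ℝ) - (clt z (Fin.last n) : ℝ))) := by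
        ext u
        simp only [hsdef, Set.mem_preimage, Set.mem_setOf_eq, Set.mem_Iic, hFdef]
        rw [div_le_iff₀ (by positivity : (0:ℝ) < (n:ℝ) + 1), le_div_iff₀ hm]
        constructor <;> intro h <;> [nlinarith [hβdef]; nlinarith [hβdef]]
      rw [hpre, hUdist, unif_Iic]
    -- swap step
    have hswap : ∀ j : Fin (n+1), ∫⁻ z, g (Fin.last n) z ∂ν = ∫⁻ z, g j z ∂ν := by
      intro j
      set π : Equiv.Perm (Fin (n+1)) := Equiv.swap j (Fin.last n) with hπdef
      conv_lhs => rw [← hmap π]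
      rw [lintegral_map (hgm (Fin.last n))
        (measurable_pi_lambda _ fun i => measurable_pi_apply (π i))]
      apply lintegral_congr
      intro z
      simp only [hgdef]
      rw [clt_perm z π (Fin.last n), cle_perm z π (Fin.last n), hπdef,
        Equiv.swap_apply_right]
    -- summing over j
    have hβ0 : 0 ≤ β := by positivity
    have hβ1 : β ≤ (n : ℝ) + 1 := by
      rw [hβdef]
      nlinarith
    have hptwise : ∀ z, ∑ j : Fin (n+1), g j z = ENNReal.ofReal β := by
      intro z
      have : ∀ j : Fin (n+1), g j z = ENNReal.ofReal
          (max 0 (min ((β - (clt z j : ℝ)) / ((cle z j : ℝ) - (clt z j : ℝ))) 1)) := by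
        intro j
        rw [ofReal_max_zero]
      rw [Finset.sum_congr rfl fun j _ => this j,
        ← ENNReal.ofReal_sum_of_nonneg (fun j _ => le_max_left 0 _),
        key z hβ0 hβ1]
    have hsum : (↑(n+1) : ℝ≥0∞) * ∫⁻ z, g (Fin.last n) z ∂ν = ENNReal.ofReal β := by
      calc (↑(n+1) : ℝ≥0∞) * ∫⁻ z, g (Fin.last n) z ∂ν
          = ∑ j : Fin (n+1), ∫⁻ z, g (Fin.last n) z ∂ν := by
            rw [Finset.sum_const, Finset.card_univ, Fintype.card_fin, nsmul_eq_mul]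
        _ = ∑ j : Fin (n+1), ∫⁻ z, g j z ∂ν := Finset.sum_congr rfl fun j _ => hswap j
        _ = ∫⁻ z, ∑ j : Fin (n+1), g j z ∂ν :=
            (lintegral_finset_sum _ fun j _ => hgm j).symm
        _ = ∫⁻ _, ENNReal.ofReal β ∂ν := lintegral_congr hptwise
        _ = ENNReal.ofReal β := by simp
    have hofβ : ENNReal.ofReal β = (↑(n+1) : ℝ≥0∞) * ENNReal.ofReal α := by
      rw [hβdef, ENNReal.ofReal_mul (by positivity)]
      congr 1
      rw [← ENNReal.ofReal_natCast (n+1)]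
      push_cast
      ring_nf
    rw [h2]
    have hcancel := hsum.trans hofβ
    have hne : (↑(n+1) : ℝ≥0∞) ≠ 0 := by simp
    have hnetop : (↑(n+1) : ℝ≥0∞) ≠ ⊤ := by simp
    exact ennreal_cancel hne hnetop hcancel
  constructor
  · intro α hα
    exact (hmain α hα.1 hα.2).le
  · haveI : IsFiniteMeasure (volume.restrict (Set.Icc (0:ℝ) 1)) := by
      constructor
      rw [Measure.restrict_apply_univ, Real.volume_Icc]
      simp
    haveI : IsProbabilityMeasure (Measure.map (confPValue n Z U) μ) :=
      Measure.isProbabilityMeasure_map hconfm.aemeasurable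
    apply Measure.ext_of_Iic
    intro a
    rw [Measure.map_apply hconfm measurableSet_Iic, unif_Iic]
    have hset : confPValue n Z U ⁻¹' Set.Iic a = {ω | confPValue n Z U ω ≤ a} := rfl
    rw [hset]
    rcases le_total a 0 with h | h
    · rcases eq_or_lt_of_le h with heq | hlt
      · rw [heq] at *
        rw [hmain 0 le_rfl zero_le_one]
        rw [min_eq_left (by linarith)]
      · have hsub : {ω | confPValue n Z U ω ≤ a} ⊆ {ω | confPValue n Z U ω ≤ 0} :=
          fun ω hω => le_trans hω h
        have := measure_mono (μ := μ) hsub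
        rw [hmain 0 le_rfl zero_le_one] at this
        simp only [ENNReal.ofReal_zero, nonpos_iff_eq_zero] at this
        rw [this, min_eq_left (by linarith), ENNReal.ofReal_eq_zero.mpr hlt.le]
    · rcases le_total a 1 with h' | h'
      · rw [hmain a h h', min_eq_left h']
      · have hsub : {ω | confPValue n Z U ω ≤ 1} ⊆ {ω | confPValue n Z U ω ≤ a} :=
          fun ω hω => le_trans hω h'
        have hge := measure_mono (μ := μ) hsub
        rw [hmain 1 zero_le_one le_rfl] at hge
        have hle : μ {ω | confPValue n Z U ω ≤ a} ≤ 1 := prob_le_one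
        rw [min_eq_right h']
        simp only [ENNReal.ofReal_one] at hge ⊢
        exact le_antisymm hle hge
end

section
/- Benjamini–Hochberg FDR control under independence: let p₁,…,p_m be p-values such that the p-values corresponding to true null hypotheses are mutually independent, independent of the false-null p-values, and each true-null p-value is super-uniform (P(p_j ≤ t) ≤ t for all t ∈ [0,1]). Apply the BH procedure at level α: let k = max{r : p_{(r)} ≤ αr/m} (k = 0 if no such r), and reject S = {j : p_j ≤ p_{(k)}}. Then FDR = E[V / max(1, R)] ≤ α·m₀/m ≤ α, where R = |S|, V = #{j ∈ S : H_j true}, and m₀ is the number of true nulls. -/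
open MeasureTheory ProbabilityTheory
open scoped Classical

/-- The number of rejections `k = max {r : p_(r) ≤ α r / m}` of the Benjamini–Hochberg
procedure at level `α`, expressed via the standard equivalence
`p_(r) ≤ t ↔ #{j : p j ≤ t} ≥ r` (with `k = 0` when no such `r` exists). -/
noncomputable def bhK (α : ℝ) (m : ℕ) (p : Fin m → ℝ) : ℕ :=
  sSup {r : ℕ | r ≤ m ∧ r ≤ (Finset.univ.filter fun j => p j ≤ α * r / m).card}

/-- The Benjamini–Hochberg rejection set `S = {j : p j ≤ α k / m}` at level `α`. -/
noncomputable def bhReject (α : ℝ) (m : ℕ) (p : Fin m → ℝ) : Finset (Fin m) :=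
  Finset.univ.filter fun j => p j ≤ α * (bhK α m p) / m

namespace BHproof

noncomputable def cnt (m : ℕ) (x : Fin m → ℝ) (t : ℝ) : ℕ :=
  (Finset.univ.filter fun j => x j ≤ t).card

lemma cnt_mono (m : ℕ) (x : Fin m → ℝ) {t t' : ℝ} (h : t ≤ t') : cnt m x t ≤ cnt m x t' := by
  apply Finset.card_le_card
  intro i hi
  simp only [Finset.mem_filter, Finset.mem_univ, true_and] at hi ⊢
  exact hi.trans h

lemma cnt_le (m : ℕ) (x : Fin m → ℝ) (t : ℝ) : cnt m x t ≤ m := by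
  have := Finset.card_filter_le (Finset.univ : Finset (Fin m)) (fun j => x j ≤ t)
  simpa [cnt] using this

def bhSet (α : ℝ) (m : ℕ) (x : Fin m → ℝ) : Set ℕ :=
  {r : ℕ | r ≤ m ∧ r ≤ cnt m x (α * r / m)}

lemma bhK_eq (α : ℝ) (m : ℕ) (x : Fin m → ℝ) : bhK α m x = sSup (bhSet α m x) := rfl

lemma zero_mem_bhSet (α : ℝ) (m : ℕ) (x : Fin m → ℝ) : 0 ∈ bhSet α m x :=
  ⟨Nat.zero_le _, Nat.zero_le _⟩

lemma bhSet_bddAbove (α : ℝ) (m : ℕ) (x : Fin m → ℝ) : BddAbove (bhSet α m x) :=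
  ⟨m, fun _ hr => hr.1⟩

lemma bhK_mem (α : ℝ) (m : ℕ) (x : Fin m → ℝ) : bhK α m x ∈ bhSet α m x :=
  Nat.sSup_mem ⟨0, zero_mem_bhSet α m x⟩ (bhSet_bddAbove α m x)

lemma le_bhK (α : ℝ) (m : ℕ) (x : Fin m → ℝ) {r : ℕ} (hr : r ∈ bhSet α m x) :
    r ≤ bhK α m x :=
  le_csSup (bhSet_bddAbove α m x) hr

lemma bhReject_card (α : ℝ) (m : ℕ) (hm : 0 < m) (hα0 : 0 ≤ α) (x : Fin m → ℝ) :
    (bhReject α m x).card = bhK α m x := by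
  have hR : (bhReject α m x).card = cnt m x (α * bhK α m x / m) := rfl
  have hkR : bhK α m x ≤ (bhReject α m x).card := by
    rw [hR]; exact (bhK_mem α m x).2
  have hRk : (bhReject α m x).card ≤ bhK α m x := by
    apply le_bhK
    constructor
    · rw [hR]; exact cnt_le m x _
    · rw [hR]
      apply cnt_mono
      have hmR : (0:ℝ) < m := by exact_mod_cast hm
      have : (bhK α m x : ℝ) ≤ (bhReject α m x).card := by exact_mod_cast hkR
      calc α * bhK α m x / m ≤ α * (bhReject α m x).card / m := by gcongr
        _ = α * cnt m x (α * bhK α m x / m) / m := by rw [hR]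
  omega

lemma cnt_update_ge (m : ℕ) (x : Fin m → ℝ) (j : Fin m) {t : ℝ} (ht : 0 ≤ t) :
    cnt m x t ≤ cnt m (Function.update x j 0) t := by
  apply Finset.card_le_card
  intro i hi
  simp only [Finset.mem_filter, Finset.mem_univ, true_and] at hi ⊢
  rcases eq_or_ne i j with rfl | hij
  · simp [Function.update_self, ht]
  · simpa [Function.update_of_ne hij] using hi

lemma cnt_update_eq (m : ℕ) (x : Fin m → ℝ) (j : Fin m) {t : ℝ} (ht : 0 ≤ t)
    (hx : x j ≤ t) : cnt m (Function.update x j 0) t = cnt m x t := by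
  unfold cnt
  congr 1
  apply Finset.filter_congr
  intro i _
  rcases eq_or_ne i j with rfl | hij
  · simp [Function.update_self, ht, hx]
  · simp [Function.update_of_ne hij]

lemma bhSet_subset_update (α : ℝ) (m : ℕ) (hm : 0 < m) (hα0 : 0 ≤ α) (x : Fin m → ℝ)
    (j : Fin m) : bhSet α m x ⊆ bhSet α m (Function.update x j 0) := by
  rintro r ⟨h1, h2⟩
  refine ⟨h1, h2.trans (cnt_update_ge m x j ?_)⟩
  positivity

/-- Leave-one-out invariance of the BH threshold index. -/
lemma bhK_update (α : ℝ) (m : ℕ) (hm : 0 < m) (hα0 : 0 ≤ α) (x : Fin m → ℝ)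
    (j : Fin m) (r : ℕ) (hx : x j ≤ α * r / m) :
    bhK α m x = r ↔ bhK α m (Function.update x j 0) = r := by
  have ht0 : (0:ℝ) ≤ α * r / m := by positivity
  constructor
  · rintro rfl
    have hge : bhK α m x ≤ bhK α m (Function.update x j 0) :=
      le_bhK α m _ (bhSet_subset_update α m hm hα0 x j (bhK_mem α m x))
    have hle : bhK α m (Function.update x j 0) ≤ bhK α m x := by
      apply le_bhK
      obtain ⟨h1, h2⟩ := bhK_mem α m (Function.update x j 0)
      set s := bhK α m (Function.update x j 0) with hs
      refine ⟨h1, ?_⟩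
      have hts : α * (bhK α m x) / m ≤ α * s / m := by
        have hmR : (0:ℝ) < m := by exact_mod_cast hm
        have : (bhK α m x : ℝ) ≤ s := by exact_mod_cast hge
        gcongr
      have hxj : x j ≤ α * s / m := hx.trans hts
      rw [← cnt_update_eq m x j (ht0.trans hts) hxj]
      exact h2
    omega
  · rintro rfl
    set s := bhK α m (Function.update x j 0) with hs
    have hle : bhK α m x ≤ s :=
      le_bhK α m _ (bhSet_subset_update α m hm hα0 x j (bhK_mem α m x))
    have hge : s ≤ bhK α m x := by
      apply le_bhK
      obtain ⟨h1, h2⟩ := bhK_mem α m (Function.update x j 0)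
      exact ⟨h1, by rwa [cnt_update_eq m x j ht0 hx] at h2⟩
    omega

lemma measurable_cnt (m : ℕ) (t : ℝ) : Measurable (fun x : Fin m → ℝ => cnt m x t) := by
  have : (fun x : Fin m → ℝ => cnt m x t)
      = fun x => ∑ j : Fin m, if x j ≤ t then 1 else 0 := by
    funext x
    unfold cnt
    rw [Finset.card_filter]
  rw [this]
  apply Finset.measurable_sum
  intro j _
  apply Measurable.ite ?_ measurable_const measurable_const
  exact measurableSet_le (measurable_pi_apply j) measurable_const

variable {α : ℝ} {m : ℕ}

lemma bhK_eq_iff (α : ℝ) (m : ℕ) (x : Fin m → ℝ) (r : ℕ) :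
    bhK α m x = r ↔ (r ≤ m ∧ r ≤ cnt m x (α * r / m)) ∧
      ∀ s, s ≤ m → r < s → ¬ s ≤ cnt m x (α * s / m) := by
  constructor
  · rintro rfl
    refine ⟨bhK_mem α m x, ?_⟩
    intro s hs hlt hcnt
    exact absurd (le_bhK α m x ⟨hs, hcnt⟩) (by omega)
  · rintro ⟨hmem, hmax⟩
    have h1 : r ≤ bhK α m x := le_bhK α m x hmem
    have h2 := bhK_mem α m x
    by_contra hne
    exact hmax _ h2.1 (by omega) h2.2

lemma measurableSet_bhK_eq (α : ℝ) (m : ℕ) (r : ℕ) :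
    MeasurableSet {x : Fin m → ℝ | bhK α m x = r} := by
  have : {x : Fin m → ℝ | bhK α m x = r}
      = ({x | r ≤ m ∧ r ≤ cnt m x (α * r / m)} ∩
        ⋂ (s : ℕ) (_ : s ≤ m) (_ : r < s), {x | ¬ s ≤ cnt m x (α * s / m)}) := by
    ext x
    simp only [Set.mem_setOf_eq, Set.mem_inter_iff, Set.mem_iInter, bhK_eq_iff]
  rw [this]
  apply MeasurableSet.inter
  · rcases le_or_gt r m with h | h
    · have : {x : Fin m → ℝ | r ≤ m ∧ r ≤ cnt m x (α * r / m)}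
          = (fun x => cnt m x (α * r / m)) ⁻¹' (Set.Ici r) := by
        ext x; simp [h]
      rw [this]
      exact (measurable_cnt m _) measurableSet_Ici
    · have : {x : Fin m → ℝ | r ≤ m ∧ r ≤ cnt m x (α * r / m)} = ∅ := by
        ext x; simp; omega
      simp [this]
  · apply MeasurableSet.iInter; intro s
    apply MeasurableSet.iInter; intro _
    apply MeasurableSet.iInter; intro _
    have : {x : Fin m → ℝ | ¬ s ≤ cnt m x (α * s / m)}
        = (fun x => cnt m x (α * s / m)) ⁻¹' (Set.Ici s)ᶜ := by
      ext x; simp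
    rw [this]
    exact ((measurable_cnt m _) measurableSet_Ici).compl

lemma measurable_bhK (α : ℝ) (m : ℕ) : Measurable (bhK α m) :=
  measurable_to_countable' (fun r => measurableSet_bhK_eq α m r)

lemma indepFun_pair_right {Ω β γ δ : Type*} {mΩ : MeasurableSpace Ω}
    {mβ : MeasurableSpace β} {mγ : MeasurableSpace γ} {mδ : MeasurableSpace δ}
    {μ : Measure Ω} [IsProbabilityMeasure μ]
    {X : Ω → β} {Y : Ω → γ} {Z : Ω → δ}
    (hX : Measurable X) (hY : Measurable Y) (hZ : Measurable Z)
    (hXY : IndepFun X Y μ) (hXYZ : IndepFun (fun ω => (X ω, Y ω)) Z μ) :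
    IndepFun X (fun ω => (Y ω, Z ω)) μ := by
  have hYZ : IndepFun Y Z μ := by
    have := hXYZ.comp (measurable_snd) (measurable_id)
    exact this
  rw [IndepFun_iff_Indep]
  have hcomap : MeasurableSpace.comap (fun ω => (Y ω, Z ω))
      (Prod.instMeasurableSpace) = mγ.comap Y ⊔ mδ.comap Z := by
    have h1 : (Prod.instMeasurableSpace : MeasurableSpace (γ × δ))
        = mγ.comap Prod.fst ⊔ mδ.comap Prod.snd := rfl
    rw [h1, MeasurableSpace.comap_sup, MeasurableSpace.comap_comp, MeasurableSpace.comap_comp]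
    rfl
  rw [hcomap]
  set p2 : Set (Set Ω) := {s | ∃ u v, MeasurableSet[mγ.comap Y] u ∧
    MeasurableSet[mδ.comap Z] v ∧ s = u ∩ v} with hp2def
  have hgen2 : mγ.comap Y ⊔ mδ.comap Z = MeasurableSpace.generateFrom p2 := by
    apply le_antisymm
    · apply sup_le
      · intro s hs
        exact MeasurableSpace.measurableSet_generateFrom
          ⟨s, Set.univ, hs, MeasurableSet.univ, by simp⟩
      · intro s hs
        exact MeasurableSpace.measurableSet_generateFrom
          ⟨Set.univ, s, MeasurableSet.univ, hs, by simp⟩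
    · apply MeasurableSpace.generateFrom_le
      rintro s ⟨u, v, hu, hv, rfl⟩
      exact MeasurableSet.inter (le_sup_left (α := MeasurableSpace Ω) _ hu)
        (le_sup_right (α := MeasurableSpace Ω) _ hv)
  apply IndepSets.indep (hX.comap_le) (sup_le hY.comap_le hZ.comap_le)
    (@MeasurableSpace.isPiSystem_measurableSet Ω (mβ.comap X)) ?_
    (@MeasurableSpace.generateFrom_measurableSet Ω (mβ.comap X)).symm hgen2 ?_
  · -- IsPiSystem p2
    rintro s ⟨u, v, hu, hv, rfl⟩ s' ⟨u', v', hu', hv', rfl⟩ _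
    exact ⟨u ∩ u', v ∩ v', hu.inter hu', hv.inter hv', by
      rw [Set.inter_inter_inter_comm]⟩
  · -- IndepSets
    rw [IndepSets_iff]
    rintro s t hs ⟨u, v, hu, hv, rfl⟩
    obtain ⟨A, hA, rfl⟩ := hs
    obtain ⟨B, hB, rfl⟩ := hu
    obtain ⟨C, hC, rfl⟩ := hv
    have h1 : X ⁻¹' A ∩ (Y ⁻¹' B ∩ Z ⁻¹' C)
        = ((fun ω => (X ω, Y ω)) ⁻¹' (A ×ˢ B)) ∩ Z ⁻¹' C := by
      ext ω; simp [Set.mem_prod]; tauto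
    rw [h1, hXYZ.measure_inter_preimage_eq_mul _ _ (hA.prod hB) hC]
    have h2 : (fun ω => (X ω, Y ω)) ⁻¹' (A ×ˢ B) = X ⁻¹' A ∩ Y ⁻¹' B := by
      ext ω; simp [Set.mem_prod]
    rw [h2, hXY.measure_inter_preimage_eq_mul _ _ hA hB,
      hYZ.measure_inter_preimage_eq_mul _ _ hB hC]
    ring


lemma indep_pj_update {Ω : Type*} [MeasurableSpace Ω] (μ : Measure Ω) [IsProbabilityMeasure μ]
    (m : ℕ) (p : Fin m → Ω → ℝ) (hmeas : ∀ j, Measurable (p j)) (T : Finset (Fin m))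
    (hiid : iIndepFun (fun j : T => p j) μ)
    (hindep : IndepFun (fun ω => fun j : T => p (j : Fin m) ω)
      (fun ω => fun j : {j : Fin m // j ∉ T} => p (j : Fin m) ω) μ)
    (j : Fin m) (hj : j ∈ T) :
    IndepFun (p j) (fun ω => Function.update (fun i => p i ω) j 0) μ := by
  set j' : {x // x ∈ T} := ⟨j, hj⟩ with hj'
  set E : Finset {x // x ∈ T} := Finset.univ.erase j' with hE
  set Y : Ω → ({x // x ∈ E} → ℝ) :=
    fun ω => fun i => p ((i : {x // x ∈ T}) : Fin m) ω with hY
  set Z : Ω → ({i : Fin m // i ∉ T} → ℝ) :=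
    fun ω => fun i => p (i : Fin m) ω with hZ
  have hYmeas : Measurable Y :=
    measurable_pi_lambda _ (fun i => hmeas _)
  have hZmeas : Measurable Z :=
    measurable_pi_lambda _ (fun i => hmeas _)
  have hdisj : Disjoint ({j'} : Finset {x // x ∈ T}) E :=
    Finset.disjoint_singleton_left.2 (Finset.notMem_erase j' _)
  have step1 := hiid.indepFun_finset {j'} E hdisj
    (fun i => hmeas (i : Fin m))
  have hXY : IndepFun (p j) Y μ := by
    have := step1.comp
      (φ := fun u : (({j'} : Finset {x // x ∈ T}) → ℝ) =>
        u ⟨j', Finset.mem_singleton_self j'⟩)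
      (ψ := id) (_mγ := inferInstance) (measurable_pi_apply _) measurable_id
    exact this
  have hXYZ : IndepFun (fun ω => (p j ω, Y ω)) Z μ := by
    have := hindep.comp
      (φ := fun u : ({x // x ∈ T} → ℝ) =>
        (u j', fun i : {x // x ∈ E} => u (i : {x // x ∈ T})))
      (ψ := id) (_mγ := inferInstance)
      ((measurable_pi_apply _).prodMk (measurable_pi_lambda _ (fun i => measurable_pi_apply _)))
      measurable_id
    exact this
  have combo : IndepFun (p j) (fun ω => (Y ω, Z ω)) μ :=
    indepFun_pair_right (hmeas j) hYmeas hZmeas hXY hXYZ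
  set ρ : (({x // x ∈ E} → ℝ) × ({i : Fin m // i ∉ T} → ℝ))
      → (Fin m → ℝ) :=
    fun uv i => if h : i ∈ T then
      (if h2 : i = j then 0 else uv.1 ⟨⟨i, h⟩, by
        rw [hE]
        exact Finset.mem_erase.2
          ⟨by simpa [hj', Subtype.ext_iff] using h2, Finset.mem_univ _⟩⟩)
      else uv.2 ⟨i, h⟩ with hρdef
  have hρ : Measurable ρ := by
    apply measurable_pi_lambda
    intro i
    by_cases h : i ∈ T
    · by_cases h2 : i = j
      · simp only [hρdef, dif_pos h, dif_pos h2]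
        exact measurable_const
      · simp only [hρdef, dif_pos h, dif_neg h2]
        exact (measurable_pi_apply _).comp measurable_fst
    · simp only [hρdef, dif_neg h]
      exact (measurable_pi_apply _).comp measurable_snd
  have hqeq : (fun ω => Function.update (fun i => p i ω) j 0)
      = ρ ∘ (fun ω => (Y ω, Z ω)) := by
    funext ω
    funext i
    by_cases h2 : i = j
    · subst h2
      simp [hρdef, Function.update_self, hj]
    · simp [hρdef, Function.update_of_ne h2, h2]
      by_cases h : i ∈ T
      · simp [h, hY]
      · simp [h, hZ]
  rw [hqeq]
  exact combo.comp measurable_id hρ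


end BHproof

open BHproof
open scoped ENNReal

/-- Benjamini–Hochberg FDR control under independence: if the true-null p-values
(indexed by `T`) are mutually independent, independent of the false-null p-values, and
each is super-uniform, then the BH procedure at level `α` satisfies
`FDR = E[V / max(1, R)] ≤ α m₀ / m ≤ α`. -/
theorem stmt12 {Ω : Type*} [MeasurableSpace Ω] (μ : Measure Ω) [IsProbabilityMeasure μ]
    (m : ℕ) (hm : 0 < m) (α : ℝ) (hα0 : 0 ≤ α) (hα1 : α ≤ 1)
    (p : Fin m → Ω → ℝ) (hmeas : ∀ j, Measurable (p j))
    (hrange : ∀ j ω, p j ω ∈ Set.Icc (0 : ℝ) 1)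
    (T : Finset (Fin m))
    (hiid : iIndepFun (fun j : T => p j) μ)
    (hindep : IndepFun (fun ω => fun j : T => p (j : Fin m) ω)
      (fun ω => fun j : {j : Fin m // j ∉ T} => p (j : Fin m) ω) μ)
    (hsup : ∀ j ∈ T, ∀ t ∈ Set.Icc (0 : ℝ) 1,
      μ {ω | p j ω ≤ t} ≤ ENNReal.ofReal t) :
    (∫ ω, (((bhReject α m (fun j => p j ω) ∩ T).card : ℝ) /
        ((max 1 (bhReject α m (fun j => p j ω)).card : ℕ) : ℝ)) ∂μ) ≤
        α * T.card / m ∧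
      α * T.card / m ≤ α := by
  have hmR : (0:ℝ) < m := by exact_mod_cast hm
  have hTc : (T.card : ℝ) ≤ m := by
    exact_mod_cast (Finset.card_le_univ T).trans (le_of_eq (Finset.card_fin m))
  refine ⟨?_, ?_⟩
  swap
  · rw [div_le_iff₀ hmR]
    calc α * T.card ≤ α * m := by
          exact mul_le_mul_of_nonneg_left hTc hα0
      _ = α * m := rfl
  -- main FDR bound
  set x : Ω → (Fin m → ℝ) := fun ω i => p i ω with hx
  have hxmeas : Measurable x := measurable_pi_lambda _ hmeas
  set q : Fin m → Ω → (Fin m → ℝ) := fun j ω => Function.update (x ω) j 0 with hq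
  have hqmeas : ∀ j, Measurable (q j) := by
    intro j
    apply measurable_pi_lambda
    intro i
    rcases eq_or_ne i j with rfl | hij
    · simp only [hq, Function.update_self]
      exact measurable_const
    · simp only [hq, Function.update_of_ne hij]
      exact hmeas i
  set E : Fin m → ℕ → Set Ω :=
    fun j r => {ω | p j ω ≤ α * r / m ∧ bhK α m (x ω) = r} with hE
  set A : Fin m → ℕ → Set Ω := fun j r => {ω | bhK α m (q j ω) = r} with hA
  have hAmeas : ∀ j r, MeasurableSet (A j r) := by
    intro j r
    exact (hqmeas j) (measurableSet_bhK_eq α m r)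
  have hEeq : ∀ j r, E j r = {ω | p j ω ≤ α * r / m} ∩ A j r := by
    intro j r
    ext ω
    simp only [hE, hA, Set.mem_setOf_eq, Set.mem_inter_iff]
    constructor
    · rintro ⟨h1, h2⟩
      exact ⟨h1, (bhK_update α m hm hα0 (x ω) j r h1).1 h2⟩
    · rintro ⟨h1, h2⟩
      exact ⟨h1, (bhK_update α m hm hα0 (x ω) j r h1).2 h2⟩
  have hEmeas : ∀ j r, MeasurableSet (E j r) := by
    intro j r
    rw [hEeq]
    exact (measurableSet_le (hmeas j) measurable_const).inter (hAmeas j r)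
  -- pointwise decomposition
  have hpoint : ∀ ω, (((bhReject α m (fun j => p j ω) ∩ T).card : ℝ) /
      ((max 1 (bhReject α m (fun j => p j ω)).card : ℕ) : ℝ))
      = ∑ j ∈ T, ∑ r ∈ Finset.Icc 1 m,
          (r : ℝ)⁻¹ * Set.indicator (E j r) (fun _ => (1:ℝ)) ω := by
    intro ω
    have hxω : (fun j => p j ω) = x ω := rfl
    rw [hxω]
    have hcard : (bhReject α m (x ω)).card = bhK α m (x ω) :=
      bhReject_card α m hm hα0 (x ω)
    set k := bhK α m (x ω) with hk
    by_cases hk0 : k = 0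
    · have hnum : (bhReject α m (x ω) ∩ T).card = 0 := by
        have := Finset.card_le_card (Finset.inter_subset_left
          (s₁ := bhReject α m (x ω)) (s₂ := T))
        omega
      rw [hnum]
      simp only [Nat.cast_zero, zero_div]
      symm
      apply Finset.sum_eq_zero
      intro j _
      apply Finset.sum_eq_zero
      intro r hr
      rw [Finset.mem_Icc] at hr
      have : ω ∉ E j r := by
        simp only [hE, Set.mem_setOf_eq, ← hk]
        rintro ⟨-, h2⟩
        omega
      simp [Set.indicator_apply, this]
    · have hk1 : 1 ≤ k := Nat.one_le_iff_ne_zero.2 hk0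
      have hkm : k ≤ m := (bhK_mem α m (x ω)).1
      have hkmem : k ∈ Finset.Icc 1 m := Finset.mem_Icc.2 ⟨hk1, hkm⟩
      have hinner : ∀ j, ∑ r ∈ Finset.Icc 1 m,
          (r : ℝ)⁻¹ * Set.indicator (E j r) (fun _ => (1:ℝ)) ω
          = (k : ℝ)⁻¹ * (if p j ω ≤ α * k / m then 1 else 0) := by
        intro j
        rw [Finset.sum_eq_single_of_mem k hkmem]
        · congr 1
          simp only [hE, Set.indicator_apply, Set.mem_setOf_eq, ← hk]
          by_cases hp : p j ω ≤ α * k / m <;> simp [hp]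
        · intro r _ hrk
          have : ω ∉ E j r := by
            simp only [hE, Set.mem_setOf_eq, ← hk]
            rintro ⟨-, h2⟩
            exact hrk h2.symm
          simp [Set.indicator_apply, this]
      have hfilter : bhReject α m (x ω) ∩ T
          = T.filter (fun j => p j ω ≤ α * k / m) := by
        ext i
        simp only [bhReject, ← hk, Finset.mem_inter, Finset.mem_filter, Finset.mem_univ,
          true_and]
        tauto
      have hmax : ((max 1 (bhReject α m (x ω)).card : ℕ) : ℝ) = (k : ℝ) := by
        rw [hcard]
        norm_cast
        omega
      rw [hmax, hfilter]
      calc ((T.filter (fun j => p j ω ≤ α * k / m)).card : ℝ) / (k : ℝ)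
          = (k : ℝ)⁻¹ * ∑ j ∈ T, (if p j ω ≤ α * k / m then (1:ℝ) else 0) := by
            rw [Finset.sum_boole]
            rw [div_eq_mul_inv, mul_comm]
        _ = ∑ j ∈ T, (k : ℝ)⁻¹ * (if p j ω ≤ α * k / m then 1 else 0) := by
            rw [Finset.mul_sum]
        _ = ∑ j ∈ T, ∑ r ∈ Finset.Icc 1 m,
              (r : ℝ)⁻¹ * Set.indicator (E j r) (fun _ => (1:ℝ)) ω := by
            apply Finset.sum_congr rfl
            intro j _
            rw [hinner j]
  -- rewrite the integral
  have hIntegrand : (fun ω => (((bhReject α m (fun j => p j ω) ∩ T).card : ℝ) /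
      ((max 1 (bhReject α m (fun j => p j ω)).card : ℕ) : ℝ)))
      = fun ω => ∑ j ∈ T, ∑ r ∈ Finset.Icc 1 m,
          (r : ℝ)⁻¹ * Set.indicator (E j r) (fun _ => (1:ℝ)) ω := funext hpoint
  have hint : ∀ (j : Fin m) (r : ℕ), Integrable
      (fun ω => (r : ℝ)⁻¹ * Set.indicator (E j r) (fun _ => (1:ℝ)) ω) μ := by
    intro j r
    exact ((integrable_const (1:ℝ)).indicator (hEmeas j r)).const_mul _
  rw [hIntegrand]
  rw [integral_finset_sum T (fun j _ => integrable_finset_sum _ (fun r _ => hint j r))]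
  have hterm : ∀ (j : Fin m) (r : ℕ), (∫ ω, (r : ℝ)⁻¹ * Set.indicator (E j r) (fun _ => (1:ℝ)) ω ∂μ)
      = (r : ℝ)⁻¹ * (μ (E j r)).toReal := by
    intro j r
    rw [integral_const_mul, integral_indicator_const (1:ℝ) (hEmeas j r)]
    simp [Measure.real]
  -- per (j, r) bound
  have hbound : ∀ j ∈ T, ∀ r ∈ Finset.Icc 1 m,
      (r : ℝ)⁻¹ * (μ (E j r)).toReal ≤ (α / m) * (μ (A j r)).toReal := by
    intro j hj r hr
    rw [Finset.mem_Icc] at hr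
    have hr1 : (1:ℝ) ≤ r := by exact_mod_cast hr.1
    have hrm : (r:ℝ) ≤ m := by exact_mod_cast hr.2
    have hc0 : 0 ≤ α * r / m := by positivity
    have hc1 : α * r / m ≤ 1 := by
      rw [div_le_one hmR]
      calc α * r ≤ 1 * (m:ℝ) := by
            apply mul_le_mul hα1 hrm (by positivity) zero_le_one
        _ = m := one_mul _
    have hindepjq : IndepFun (p j) (q j) μ :=
      indep_pj_update μ m p hmeas T hiid hindep j hj
    have hEfact : μ (E j r) ≤ ENNReal.ofReal (α * r / m) * μ (A j r) := by
      rw [hEeq j r]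
      have heq : μ ({ω | p j ω ≤ α * r / m} ∩ A j r)
          = μ {ω | p j ω ≤ α * r / m} * μ (A j r) := by
        have := hindepjq.measure_inter_preimage_eq_mul (Set.Iic (α * r / m))
          {v : Fin m → ℝ | bhK α m v = r} measurableSet_Iic (measurableSet_bhK_eq α m r)
        exact this
      rw [heq]
      exact mul_le_mul_left (hsup j hj _ ⟨hc0, hc1⟩) _
    have htR : (μ (E j r)).toReal ≤ (α * r / m) * (μ (A j r)).toReal := by
      have hne : ENNReal.ofReal (α * r / m) * μ (A j r) ≠ ⊤ :=
        ENNReal.mul_ne_top ENNReal.ofReal_ne_top (measure_ne_top μ _)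
      have := ENNReal.toReal_mono hne hEfact
      rwa [ENNReal.toReal_mul, ENNReal.toReal_ofReal hc0] at this
    calc (r : ℝ)⁻¹ * (μ (E j r)).toReal
        ≤ (r : ℝ)⁻¹ * ((α * r / m) * (μ (A j r)).toReal) := by
          apply mul_le_mul_of_nonneg_left htR (by positivity)
      _ = (α / m) * (μ (A j r)).toReal := by
          have hrne : (r:ℝ) ≠ 0 := by linarith
          field_simp
  -- sum of measures of A j r over r is at most 1
  have hAsum : ∀ j, ∑ r ∈ Finset.Icc 1 m, (μ (A j r)).toReal ≤ 1 := by
    intro j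
    have hdisj : Set.PairwiseDisjoint (↑(Finset.Icc 1 m) : Set ℕ) (A j) := by
      intro r _ s _ hrs
      rw [Function.onFun, Set.disjoint_left]
      intro ω h1 h2
      simp only [hA, Set.mem_setOf_eq] at h1 h2
      exact hrs (h1.symm.trans h2)
    have hsum : ∑ r ∈ Finset.Icc 1 m, μ (A j r) ≤ 1 := by
      rw [← measure_biUnion_finset hdisj (fun r _ => hAmeas j r)]
      calc μ (⋃ r ∈ Finset.Icc 1 m, A j r) ≤ μ Set.univ := measure_mono (Set.subset_univ _)
        _ = 1 := measure_univ
    calc ∑ r ∈ Finset.Icc 1 m, (μ (A j r)).toReal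
        = (∑ r ∈ Finset.Icc 1 m, μ (A j r)).toReal := by
          rw [ENNReal.toReal_sum (fun r _ => measure_ne_top μ _)]
      _ ≤ (1 : ℝ≥0∞).toReal := ENNReal.toReal_mono ENNReal.one_ne_top hsum
      _ = 1 := by simp
  -- put everything together
  calc ∑ j ∈ T, ∫ ω, (∑ r ∈ Finset.Icc 1 m,
        (r : ℝ)⁻¹ * Set.indicator (E j r) (fun _ => (1:ℝ)) ω) ∂μ
      = ∑ j ∈ T, ∑ r ∈ Finset.Icc 1 m, (r : ℝ)⁻¹ * (μ (E j r)).toReal := by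
        apply Finset.sum_congr rfl
        intro j _
        rw [integral_finset_sum _ (fun r _ => hint j r)]
        exact Finset.sum_congr rfl (fun r _ => hterm j r)
    _ ≤ ∑ j ∈ T, ∑ r ∈ Finset.Icc 1 m, (α / m) * (μ (A j r)).toReal := by
        apply Finset.sum_le_sum
        intro j hj
        exact Finset.sum_le_sum (fun r hr => hbound j hj r hr)
    _ = ∑ j ∈ T, (α / m) * ∑ r ∈ Finset.Icc 1 m, (μ (A j r)).toReal := by
        apply Finset.sum_congr rfl
        intro j _
        rw [Finset.mul_sum]
    _ ≤ ∑ j ∈ T, (α / m) * 1 := by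
        apply Finset.sum_le_sum
        intro j _
        exact mul_le_mul_of_nonneg_left (hAsum j) (by positivity)
    _ = α * T.card / m := by
        rw [Finset.sum_const, nsmul_eq_mul]
        ring
end

section
/- BH key lemma (leave-one-out bound): for the BH procedure at level α applied to p-values p₁,…,p_m, if p_j is super-uniform and independent of (p_i)_{i≠j}, then E[ 𝟙{j ∈ S} / max(1, R) ] ≤ α/m, where S is the BH rejection set and R = |S|. -/
open MeasureTheory ProbabilityTheory
open scoped Classical

namespace BHaux

variable {α : ℝ} {m : ℕ}

lemma bddT (α : ℝ) (m : ℕ) (x : Fin m → ℝ) :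
    BddAbove {r : ℕ | r ≤ m ∧ r ≤ (Finset.univ.filter fun i => x i ≤ α * r / m).card} :=
  ⟨m, fun _ hr => hr.1⟩

lemma bhK_spec (α : ℝ) (m : ℕ) (x : Fin m → ℝ) :
    bhK α m x ≤ m ∧
      bhK α m x ≤ (Finset.univ.filter fun i => x i ≤ α * (bhK α m x) / m).card :=
  Nat.sSup_mem ⟨0, by simp⟩ (bddT α m x)

lemma le_bhK (α : ℝ) (m : ℕ) (x : Fin m → ℝ) {r : ℕ} (h1 : r ≤ m)
    (h2 : r ≤ (Finset.univ.filter fun i => x i ≤ α * r / m).card) :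
    r ≤ bhK α m x :=
  le_csSup (bddT α m x) ⟨h1, h2⟩

lemma card_mono (x : Fin m → ℝ) {t t' : ℝ} (h : t ≤ t') :
    (Finset.univ.filter fun i => x i ≤ t).card ≤
      (Finset.univ.filter fun i => x i ≤ t').card := by
  apply Finset.card_le_card
  intro i hi
  simp only [Finset.mem_filter, Finset.mem_univ, true_and] at hi ⊢
  exact hi.trans h

/-- R = card (bhReject) = bhK. -/
lemma card_bhReject (hα0 : 0 ≤ α) (x : Fin m → ℝ) :
    (bhReject α m x).card = bhK α m x := by
  set k := bhK α m x with hk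
  have hspec := bhK_spec α m x
  apply le_antisymm
  · -- card ≤ k : card ∈ T
    set R := (bhReject α m x).card with hR
    apply le_bhK α m x
    · exact (Finset.card_filter_le _ _).trans (by simp)
    · have hkR : k ≤ R := hspec.2
      calc R = (Finset.univ.filter fun i => x i ≤ α * k / m).card := rfl
        _ ≤ (Finset.univ.filter fun i => x i ≤ α * R / m).card :=
            card_mono x (by gcongr <;> exact_mod_cast hkR)
  · exact hspec.2

/-- antitone -/
lemma bhK_le_bhK (x x' : Fin m → ℝ) (h : ∀ i, x' i ≤ x i) :
    bhK α m x ≤ bhK α m x' := by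
  have hspec := bhK_spec α m x
  apply le_bhK α m x' hspec.1
  refine hspec.2.trans (Finset.card_le_card ?_)
  intro i hi
  simp only [Finset.mem_filter, Finset.mem_univ, true_and] at hi ⊢
  exact (h i).trans hi

lemma one_le_bhK (hm : 0 < m) (hα0 : 0 ≤ α) {x' : Fin m → ℝ} {j : Fin m}
    (hj : x' j = 0) : 1 ≤ bhK α m x' := by
  apply le_bhK α m x' hm
  rw [Finset.one_le_card]
  exact ⟨j, by simp [hj]; positivity⟩

/-- key: if x j ≤ α k̃ / m then bhK x = bhK x'. -/
lemma bhK_eq (hα0 : 0 ≤ α) {x x' : Fin m → ℝ} {j : Fin m}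
    (hx'j : x' j = 0) (hagree : ∀ i, i ≠ j → x' i = x i) (hxj0 : 0 ≤ x j)
    (hle : x j ≤ α * (bhK α m x') / m) :
    bhK α m x = bhK α m x' := by
  have hle' : ∀ i, x' i ≤ x i := by
    intro i
    by_cases hij : i = j
    · subst hij; rw [hx'j]; exact hxj0
    · rw [hagree i hij]
  have h1 : bhK α m x ≤ bhK α m x' := bhK_le_bhK x x' hle'
  have hspec' := bhK_spec α m x'
  refine le_antisymm h1 (le_bhK α m x hspec'.1 (hspec'.2.trans (Finset.card_le_card ?_)))
  intro i hi
  simp only [Finset.mem_filter, Finset.mem_univ, true_and] at hi ⊢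
  by_cases hij : i = j
  · subst hij; exact hle
  · rw [← hagree i hij]; exact hi

/-- j ∈ S ↔ x j ≤ α k̃ / m. -/
lemma mem_bhReject_iff (hm : 0 < m) (hα0 : 0 ≤ α) {x x' : Fin m → ℝ} {j : Fin m}
    (hx'j : x' j = 0) (hagree : ∀ i, i ≠ j → x' i = x i) (hxj0 : 0 ≤ x j) :
    j ∈ bhReject α m x ↔ x j ≤ α * (bhK α m x') / m := by
  constructor
  · intro hj
    simp only [bhReject, Finset.mem_filter, Finset.mem_univ, true_and] at hj
    refine hj.trans ?_
    have hle' : ∀ i, x' i ≤ x i := by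
      intro i
      by_cases hij : i = j
      · subst hij; rw [hx'j]; exact hxj0
      · rw [hagree i hij]
    have h2 : ((bhK α m x : ℝ)) ≤ (bhK α m x' : ℝ) := by
      exact_mod_cast bhK_le_bhK (α := α) x x' hle'
    gcongr
  · intro hle
    have heq := bhK_eq hα0 hx'j hagree hxj0 hle
    simp only [bhReject, Finset.mem_filter, Finset.mem_univ, true_and]
    rw [heq]; exact hle

end BHaux

namespace BHaux

lemma measurable_bhK (α : ℝ) (m : ℕ) : Measurable (bhK α m) := by
  apply measurable_to_countable'
  intro r
  have hC : ∀ s : ℕ, MeasurableSet {x : Fin m → ℝ |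
      s ≤ m ∧ s ≤ (Finset.univ.filter fun i => x i ≤ α * s / m).card} := by
    intro s
    have hN : Measurable fun x : Fin m → ℝ =>
        (Finset.univ.filter fun i => x i ≤ α * s / m).card := by
      have h1 : (fun x : Fin m → ℝ => (Finset.univ.filter fun i => x i ≤ α * s / m).card)
          = fun x => ∑ i : Fin m, if x i ≤ α * s / m then 1 else 0 := by
        funext x; rw [Finset.card_filter]
      rw [h1]
      exact Finset.measurable_sum _ fun i _ =>
        Measurable.ite (measurableSet_le (measurable_pi_apply i) measurable_const)
          measurable_const measurable_const
    by_cases hs : s ≤ m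
    · simp only [hs, true_and]
      exact measurableSet_le measurable_const hN
    · have he : {x : Fin m → ℝ |
          s ≤ m ∧ s ≤ (Finset.univ.filter fun i => x i ≤ α * s / m).card} = ∅ := by
        ext x; simp [hs]
      rw [he]; exact MeasurableSet.empty
  have hchar : bhK α m ⁻¹' {r} =
      {x : Fin m → ℝ | r ≤ m ∧ r ≤ (Finset.univ.filter fun i => x i ≤ α * r / m).card} ∩
        ⋂ s ∈ Finset.Icc (r+1) m, ({x : Fin m → ℝ |
          s ≤ m ∧ s ≤ (Finset.univ.filter fun i => x i ≤ α * s / m).card})ᶜ := by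
    ext x
    simp only [Set.mem_preimage, Set.mem_singleton_iff, Set.mem_inter_iff, Set.mem_setOf_eq,
      Set.mem_iInter, Set.mem_compl_iff, Finset.mem_Icc]
    constructor
    · rintro rfl
      refine ⟨⟨(bhK_spec α m x).1, (bhK_spec α m x).2⟩, ?_⟩
      rintro s ⟨hs1, _⟩ ⟨h1, h2⟩
      exact absurd (le_bhK α m x h1 h2) (by omega)
    · rintro ⟨⟨h1, h2⟩, hforall⟩
      have hle := le_bhK α m x h1 h2
      by_contra hne
      exact hforall (bhK α m x) ⟨by omega, (bhK_spec α m x).1⟩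
        ⟨(bhK_spec α m x).1, (bhK_spec α m x).2⟩
  rw [hchar]
  exact (hC r).inter (Finset.measurableSet_biInter _ fun s _ => (hC s).compl)

end BHaux

noncomputable def bhF (α : ℝ) (m : ℕ) (j : Fin m) (y : {i : Fin m // i ≠ j} → ℝ) : ℕ :=
  bhK α m (fun i => if h : i = j then 0 else y ⟨i, h⟩)

lemma measurable_bhF (α : ℝ) (m : ℕ) (j : Fin m) : Measurable (bhF α m j) := by
  apply (BHaux.measurable_bhK α m).comp
  apply measurable_pi_lambda
  intro i
  by_cases h : i = j
  · simp only [dif_pos h]; exact measurable_const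
  · simp only [dif_neg h]; exact measurable_pi_apply _


/-- BH leave-one-out key lemma: for the BH procedure at level `α`, if `p j` is
super-uniform and independent of the remaining p-values, then
`E[𝟙{j ∈ S} / max(1, R)] ≤ α / m`. -/
theorem stmt13 {Ω : Type*} [MeasurableSpace Ω] (μ : Measure Ω) [IsProbabilityMeasure μ]
    (m : ℕ) (hm : 0 < m) (α : ℝ) (hα0 : 0 ≤ α) (hα1 : α ≤ 1)
    (p : Fin m → Ω → ℝ) (hmeas : ∀ i, Measurable (p i))
    (hrange : ∀ i ω, p i ω ∈ Set.Icc (0 : ℝ) 1)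
    (j : Fin m)
    (hsup : ∀ t ∈ Set.Icc (0 : ℝ) 1, μ {ω | p j ω ≤ t} ≤ ENNReal.ofReal t)
    (hindep : IndepFun (p j)
      (fun ω => fun i : {i : Fin m // i ≠ j} => p (i : Fin m) ω) μ) :
    (∫ ω, ((if j ∈ bhReject α m (fun i => p i ω) then (1 : ℝ) else 0) /
        ((max 1 (bhReject α m (fun i => p i ω)).card : ℕ) : ℝ)) ∂μ) ≤ α / m := by
  classical
  set Y : Ω → ({i : Fin m // i ≠ j} → ℝ) :=
    fun ω => fun i : {i : Fin m // i ≠ j} => p (i : Fin m) ω with hYdef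
  set K : Ω → ℕ := fun ω => bhF α m j (Y ω) with hKdef
  have hKx' : ∀ ω, K ω = bhK α m (fun i => if h : i = j then (0:ℝ) else p i ω) := fun ω => rfl
  have hK1 : ∀ ω, 1 ≤ K ω := fun ω =>
    BHaux.one_le_bhK hm hα0 (x' := fun i => if h : i = j then (0:ℝ) else p i ω) (dif_pos rfl)
  have hKm : ∀ ω, K ω ≤ m := fun ω =>
    (BHaux.bhK_spec α m (fun i => if h : i = j then (0:ℝ) else p i ω)).1
  have hiff : ∀ ω, (j ∈ bhReject α m (fun i => p i ω) ↔ p j ω ≤ α * K ω / m) := by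
    intro ω
    rw [hKx']
    exact BHaux.mem_bhReject_iff hm hα0 (dif_pos rfl) (fun i h => dif_neg h) (hrange j ω).1
  set A : ℕ → Set Ω := fun r => {ω | p j ω ≤ α * r / m} with hAdef
  set B : ℕ → Set Ω := fun r => {ω | K ω = r} with hBdef
  have hAmeas : ∀ r, MeasurableSet (A r) := fun r => (hmeas j) measurableSet_Iic
  have hYmeas : Measurable Y := measurable_pi_lambda _ fun i => hmeas (i : Fin m)
  have hKmeas : Measurable K := (measurable_bhF α m j).comp hYmeas
  have hBmeas : ∀ r, MeasurableSet (B r) := fun r => hKmeas (measurableSet_singleton r)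
  -- pointwise identity
  have hpt : ∀ ω, ((if j ∈ bhReject α m (fun i => p i ω) then (1 : ℝ) else 0) /
        ((max 1 (bhReject α m (fun i => p i ω)).card : ℕ) : ℝ))
      = ∑ r ∈ Finset.Icc 1 m, (A r ∩ B r).indicator (fun _ => ((r : ℝ))⁻¹) ω := by
    intro ω
    by_cases hc : p j ω ≤ α * K ω / m
    · have hmem : j ∈ bhReject α m (fun i => p i ω) := (hiff ω).mpr hc
      have hkeq : bhK α m (fun i => p i ω) = K ω := by
        rw [hKx']
        exact BHaux.bhK_eq hα0 (dif_pos rfl) (fun i h => dif_neg h) (hrange j ω).1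
          (by rw [← hKx']; exact hc)
      have hcard : (bhReject α m (fun i => p i ω)).card = K ω := by
        rw [BHaux.card_bhReject hα0, hkeq]
      rw [if_pos hmem, hcard, max_eq_right (hK1 ω)]
      rw [Finset.sum_eq_single_of_mem (K ω) (Finset.mem_Icc.mpr ⟨hK1 ω, hKm ω⟩)
        (fun r _ hne => Set.indicator_of_notMem (fun hmem' => hne hmem'.2.symm) _)]
      rw [Set.indicator_of_mem (show ω ∈ A (K ω) ∩ B (K ω) from ⟨hc, rfl⟩)]
      exact one_div _
    · have hnmem : j ∉ bhReject α m (fun i => p i ω) := fun h => hc ((hiff ω).mp h)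
      rw [if_neg hnmem, zero_div]
      symm
      apply Finset.sum_eq_zero
      intro r _
      by_cases hr : K ω = r
      · exact Set.indicator_of_notMem (fun hmem' => hc (by rw [hr]; exact hmem'.1)) _
      · exact Set.indicator_of_notMem (fun hmem' => hr hmem'.2) _
  -- rewrite integral
  have h0 : (∫ ω, ((if j ∈ bhReject α m (fun i => p i ω) then (1 : ℝ) else 0) /
        ((max 1 (bhReject α m (fun i => p i ω)).card : ℕ) : ℝ)) ∂μ)
      = ∑ r ∈ Finset.Icc 1 m, (μ (A r ∩ B r)).toReal * ((r : ℝ))⁻¹ := by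
    rw [integral_congr_ae (Filter.EventuallyEq.of_eq (funext hpt)),
      integral_finset_sum _ (fun r _ => (integrable_const _).indicator ((hAmeas r).inter (hBmeas r)))]
    refine Finset.sum_congr rfl fun r _ => ?_
    rw [integral_indicator_const _ ((hAmeas r).inter (hBmeas r)), smul_eq_mul, mul_comm]
    exact mul_comm _ _
  rw [h0]
  -- independence factorization
  have hfac : ∀ r, μ (A r ∩ B r) = μ (A r) * μ (B r) := by
    intro r
    have : A r ∩ B r = p j ⁻¹' Set.Iic (α * r / m) ∩ Y ⁻¹' (bhF α m j ⁻¹' {r}) := rfl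
    rw [this, hindep.measure_inter_preimage_eq_mul _ _ measurableSet_Iic
      ((measurable_bhF α m j) (measurableSet_singleton r))]
    rfl
  -- bound each term
  have hterm : ∀ r ∈ Finset.Icc 1 m,
      (μ (A r ∩ B r)).toReal * ((r : ℝ))⁻¹ ≤ (α / m) * (μ (B r)).toReal := by
    intro r hr
    obtain ⟨hr1, hrm⟩ := Finset.mem_Icc.mp hr
    have hr0 : ((r : ℝ)) ≠ 0 := Nat.cast_ne_zero.mpr (by omega)
    have hArm : (μ (A r)).toReal ≤ α * r / m := by
      have ht1 : α * r / m ≤ 1 := by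
        have : α * r / m ≤ α * m / m := by gcongr <;> exact_mod_cast hrm
        calc α * r / m ≤ α * m / m := this
          _ = α := by field_simp
          _ ≤ 1 := hα1
      have ht0 : (0:ℝ) ≤ α * r / m := by positivity
      exact ENNReal.toReal_le_of_le_ofReal ht0 (hsup _ ⟨ht0, ht1⟩)
    calc (μ (A r ∩ B r)).toReal * ((r : ℝ))⁻¹
        = (μ (A r)).toReal * (μ (B r)).toReal * ((r : ℝ))⁻¹ := by
          rw [hfac r, ENNReal.toReal_mul]
      _ ≤ (α * r / m) * (μ (B r)).toReal * ((r : ℝ))⁻¹ := by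
          gcongr
      _ = (α / m) * (μ (B r)).toReal := by field_simp
  refine le_trans (Finset.sum_le_sum hterm) ?_
  rw [← Finset.mul_sum]
  have hsum : ∑ r ∈ Finset.Icc 1 m, (μ (B r)).toReal ≤ 1 := by
    have hdisj : (↑(Finset.Icc 1 m) : Set ℕ).PairwiseDisjoint B := by
      intro r _ s _ hrs
      refine Set.disjoint_left.mpr fun {ω} hω hω' => hrs ?_
      have h1 : K ω = r := hω
      have h2 : K ω = s := hω'
      rw [← h1, h2]
    have h1 : ∑ r ∈ Finset.Icc 1 m, μ (B r) ≤ 1 := by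
      rw [← measure_biUnion_finset hdisj (fun r _ => hBmeas r)]
      exact (measure_mono (Set.subset_univ _)).trans_eq measure_univ
    have h2 : ∑ r ∈ Finset.Icc 1 m, (μ (B r)).toReal
        = (∑ r ∈ Finset.Icc 1 m, μ (B r)).toReal :=
      (ENNReal.toReal_sum (fun r _ => measure_ne_top μ _)).symm
    rw [h2]
    calc (∑ r ∈ Finset.Icc 1 m, μ (B r)).toReal ≤ (1 : ENNReal).toReal :=
        ENNReal.toReal_mono ENNReal.one_ne_top h1
      _ = 1 := ENNReal.toReal_one
  exact (mul_le_mul_of_nonneg_left hsum (by positivity)).trans_eq (mul_one _)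
end
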